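/- arXiv:0909.0171 — 10 statements merged into one kernel-verified Lean document; each statement's English description precedes it below -/
import Mathlib

section
/- The complete lattice C-Idl(P) of C-ideals of a suplattice presentation ⟨P; ⊑, C⟩, together with the map η : x ↦ ⟨x⟩, is the suplattice freely generated by the presentation: η preserves covers, and every cover-preserving order-preserving map f from P to a suplattice D factors uniquely through η via a join-preserving map. -/
section Pres
variable {P : Type*} [Preorder P]

/-- A `C`-ideal: downward closed and closed under covers. -/
def IsCIdeal (C : P → Set P → Prop) (X : Set P) : Prop :=
  (∀ x ∈ X, ∀ y, y ≤ x → y ∈ X) ∧ ∀ x U, C x U → U ⊆ X → x ∈ X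

/-- The collection of `C`-ideals, ordered by inclusion. -/
abbrev CIdl (C : P → Set P → Prop) : Type _ := {X : Set P // IsCIdeal C X}

/-- The `C`-ideal generated by a set. -/
def genC (C : P → Set P → Prop) (S : Set P) : Set P := ⋂₀ {X | IsCIdeal C X ∧ S ⊆ X}

lemma isCIdeal_sInter (C : P → Set P → Prop) (T : Set (Set P))
    (hT : ∀ X ∈ T, IsCIdeal C X) : IsCIdeal C (⋂₀ T) := by
  refine ⟨?_, ?_⟩
  · intro x hx y hyx
    rw [Set.mem_sInter] at *
    intro X hX
    exact (hT X hX).1 x (hx X hX) y hyx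
  · intro x U hU hsub
    rw [Set.mem_sInter]
    intro X hX
    exact (hT X hX).2 x U hU fun u hu => Set.mem_sInter.mp (hsub hu) X hX

lemma isCIdeal_genC (C : P → Set P → Prop) (S : Set P) : IsCIdeal C (genC C S) :=
  isCIdeal_sInter C _ fun _ hX => hX.1

lemma subset_genC (C : P → Set P → Prop) (S : Set P) : S ⊆ genC C S :=
  fun _ hs => Set.mem_sInter.mpr fun _ hX => hX.2 hs

noncomputable instance instInfCIdl (C : P → Set P → Prop) : InfSet (CIdl C) :=
  ⟨fun S => ⟨⋂₀ (Subtype.val '' S),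
    isCIdeal_sInter C _ (by rintro X ⟨Y, _, rfl⟩; exact Y.2)⟩⟩

noncomputable instance instCompleteLatticeCIdl (C : P → Set P → Prop) :
    CompleteLattice (CIdl C) :=
  completeLatticeOfInf _ (by
    intro S
    constructor
    · intro X hX
      exact fun a ha => Set.mem_sInter.mp ha X.1 ⟨X, hX, rfl⟩
    · intro Y hY a ha
      refine Set.mem_sInter.mpr ?_
      rintro Z ⟨X, hX, rfl⟩
      exact hY hX ha)

/-- The natural map `x ↦ ⟨x⟩` from a presentation into its `C`-ideals. -/
def etaC (C : P → Set P → Prop) (x : P) : CIdl C := ⟨genC C {x}, isCIdeal_genC C _⟩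

/-- The free dcpo over a dcpo presentation: the least family of `C`-ideals containing
all principal `C`-ideals and closed under directed joins. -/
def OverC (C : P → Set P → Prop) : Set (CIdl C) :=
  ⋂₀ {Y | (∀ x, etaC C x ∈ Y) ∧
      ∀ S ⊆ Y, S.Nonempty → DirectedOn (· ≤ ·) S → sSup S ∈ Y}

end Pres

section Filt
variable {A : Type*}

/-- `F` is a filter: nonempty, upward closed, downward directed. -/
def IsFilt [Preorder A] (F : Set A) : Prop :=
  F.Nonempty ∧ (∀ a ∈ F, ∀ b, a ≤ b → b ∈ F) ∧
    ∀ a ∈ F, ∀ b ∈ F, ∃ c ∈ F, c ≤ a ∧ c ≤ b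

/-- `I` is an ideal: nonempty, downward closed, upward directed. -/
def IsIdl [Preorder A] (I : Set A) : Prop :=
  I.Nonempty ∧ (∀ a ∈ I, ∀ b, b ≤ a → b ∈ I) ∧
    ∀ a ∈ I, ∀ b ∈ I, ∃ c ∈ I, a ≤ c ∧ b ≤ c

/-- The free co-directed meet completion of `A`: filters ordered by reverse inclusion. -/
def FComp (A : Type u) [Preorder A] : Type u := {F : Set A // IsFilt F}

instance [Preorder A] : PartialOrder (FComp A) where
  le x y := y.1 ⊆ x.1
  le_refl x := subset_rfl
  le_trans x y z h1 h2 := Set.Subset.trans h2 h1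
  le_antisymm x y h1 h2 := Subtype.ext (subset_antisymm h2 h1)

/-- The embedding `↑ : A → ℱ(A)` sending `a` to the principal filter. -/
def pf [Preorder A] (a : A) : FComp A :=
  ⟨{b | a ≤ b}, ⟨a, le_refl a⟩, fun x hx b hb => le_trans hx hb,
    fun x hx y hy => ⟨a, le_refl a, hx, hy⟩⟩

noncomputable instance [Lattice A] [BoundedOrder A] : InfSet (FComp A) :=
  ⟨fun S => ⟨⋂₀ {F | IsFilt F ∧ ∀ x ∈ S, x.1 ⊆ F}, by
    refine ⟨⟨⊤, ?_⟩, ?_, ?_⟩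
    · refine Set.mem_sInter.mpr ?_
      rintro F ⟨⟨⟨w, hw⟩, hup, _⟩, _⟩
      exact hup w hw ⊤ le_top
    · intro a ha b hab
      refine Set.mem_sInter.mpr fun F hF => ?_
      exact hF.1.2.1 a (Set.mem_sInter.mp ha F hF) b hab
    · intro a ha b hb
      refine ⟨a ⊓ b, ?_, inf_le_left, inf_le_right⟩
      refine Set.mem_sInter.mpr fun F hF => ?_
      obtain ⟨c, hc, hca, hcb⟩ :=
        hF.1.2.2 a (Set.mem_sInter.mp ha F hF) b (Set.mem_sInter.mp hb F hF)
      exact hF.1.2.1 c hc (a ⊓ b) (le_inf hca hcb)⟩⟩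

noncomputable instance [Lattice A] [BoundedOrder A] : CompleteLattice (FComp A) :=
  completeLatticeOfInf _ (by
    intro S
    constructor
    · intro x hx
      show x.1 ⊆ (sInf S).1
      intro a ha
      exact Set.mem_sInter.mpr fun F hF => hF.2 x hx ha
    · intro y hY
      show (sInf S).1 ⊆ y.1
      intro a ha
      exact Set.mem_sInter.mp ha y.1 ⟨y.2, fun x hx => hY hx⟩)

/-- The lifting of a monotone map to the filter completions. -/
def liftF {ι : Type*} {A : ι → Type*} {B : Type*} [∀ i, Preorder (A i)] [Preorder B]
    (f : (∀ i, A i) → B) (hf : Monotone f) (x : ∀ i, FComp (A i)) : FComp B :=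
  ⟨{b | ∃ a : ∀ i, A i, (∀ i, a i ∈ (x i).1) ∧ f a ≤ b}, by
    refine ⟨?_, ?_, ?_⟩
    · exact ⟨f (fun i => ((x i).2.1).choose), fun i => ((x i).2.1).choose,
        fun i => ((x i).2.1).choose_spec, le_rfl⟩
    · rintro b ⟨a, ha, hab⟩ c hbc
      exact ⟨a, ha, hab.trans hbc⟩
    · rintro b ⟨a1, ha1, h1⟩ c ⟨a2, ha2, h2⟩
      choose g hg hga1 hga2 using fun i => (x i).2.2.2 (a1 i) (ha1 i) (a2 i) (ha2 i)
      exact ⟨f g, ⟨g, hg, le_rfl⟩, (hf fun i => hga1 i).trans h1,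
        (hf fun i => hga2 i).trans h2⟩⟩

/-- The co-Scott continuous extension of binary join to the filter completion. -/
def supF [Lattice A] (x y : FComp A) : FComp A :=
  liftF (A := fun _ : Fin 2 => A) (fun a => a 0 ⊔ a 1)
    (fun _ _ hab => sup_le_sup (hab 0) (hab 1)) ![x, y]

/-- The co-Scott continuous extension of binary meet to the filter completion. -/
def infF [Lattice A] (x y : FComp A) : FComp A :=
  liftF (A := fun _ : Fin 2 => A) (fun a => a 0 ⊓ a 1)
    (fun _ _ hab => inf_le_inf (hab 0) (hab 1)) ![x, y]

/-- A map is co-Scott continuous if it preserves meets of nonempty co-directed sets. -/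
def CoScottCont {α β : Type*} [Preorder α] [Preorder β] (g : α → β) : Prop :=
  ∀ S : Set α, S.Nonempty → DirectedOn (· ≥ ·) S → ∀ x, IsGLB S x → IsGLB (g '' S) (g x)

/-- A map is Scott continuous if it preserves joins of nonempty directed sets. -/
def ScottContOn {α β : Type*} [Preorder α] [Preorder β] (T : Set α) (g : α → β) : Prop :=
  ∀ S ⊆ T, S.Nonempty → DirectedOn (· ≤ ·) S → ∀ x, IsLUB S x → IsLUB (g '' S) (g x)

/-- The covering relation `C_A` of the dcpo presentation `Δ(A)` on `ℱ(A)`. -/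
def covD [Preorder A] (x : FComp A) (U : Set (FComp A)) : Prop :=
  U.Nonempty ∧ DirectedOn (· ≤ ·) U ∧
    ∀ I : Set A, IsIdl I → (∀ x' ∈ U, ∃ a' ∈ I, x' ≤ pf a') → ∃ a ∈ I, x ≤ pf a

/-- `e : A → C` is a canonical extension: a dense and compact lattice completion. -/
def IsCanExt {A C : Type*} [Lattice A] [CompleteLattice C] (e : A → C) : Prop :=
  (∀ a b, e a ≤ e b ↔ a ≤ b) ∧
  (∀ a b, e (a ⊔ b) = e a ⊔ e b) ∧
  (∀ a b, e (a ⊓ b) = e a ⊓ e b) ∧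
  (∀ u v : C, ¬ u ≤ v → ∃ F I : Set A, IsFilt F ∧ IsIdl I ∧
    sInf (e '' F) ≤ u ∧ ¬ sInf (e '' F) ≤ v ∧ v ≤ sSup (e '' I) ∧ ¬ u ≤ sSup (e '' I)) ∧
  (∀ F I : Set A, IsFilt F → IsIdl I → sInf (e '' F) ≤ sSup (e '' I) →
    ∃ b ∈ F, ∃ a ∈ I, b ≤ a)

/-- `f` is an operator: it preserves binary joins in each coordinate. -/
def IsOperator {ι : Type*} [DecidableEq ι] {A : ι → Type*} {B : Type*}
    [∀ i, Lattice (A i)] [Lattice B] (f : (∀ i, A i) → B) : Prop :=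
  ∀ (a : ∀ i, A i) (i : ι) (b : A i),
    f (Function.update a i (a i ⊔ b)) = f a ⊔ f (Function.update a i b)

end Filt

section Terms

/-- Terms over a signature `Ω` with arities `ar`, in `n` variables. -/
inductive OTerm (Ω : Type*) (ar : Ω → ℕ) (n : ℕ) : Type _ where
  | var : Fin n → OTerm Ω ar n
  | op : (ω : Ω) → (Fin (ar ω) → OTerm Ω ar n) → OTerm Ω ar n

/-- Evaluation of a term under an interpretation of the operation symbols. -/
def evalT {Ω : Type*} {ar : Ω → ℕ} {n : ℕ} {A : Type*}
    (interp : ∀ ω, (Fin (ar ω) → A) → A) (v : Fin n → A) : OTerm Ω ar n → A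
  | .var i => v i
  | .op ω args => interp ω (fun j => evalT interp v (args j))

end Terms

section Aux
variable {P : Type*} [Preorder P] {C : P → Set P → Prop}

lemma genC_min {S Y : Set P} (hY : IsCIdeal C Y) (hS : S ⊆ Y) : genC C S ⊆ Y :=
  fun _ ha => Set.mem_sInter.mp ha Y ⟨hY, hS⟩

lemma etaC_le_iff {x : P} {X : CIdl C} : etaC C x ≤ X ↔ x ∈ X.1 := by
  constructor
  · intro h; exact h (subset_genC C {x} rfl)
  · intro h; exact genC_min X.2 (by simpa using h)

lemma mem_sSup_of_mem {X : CIdl C} {T : Set (CIdl C)} (hX : X ∈ T) {p : P}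
    (hp : p ∈ X.1) : p ∈ (sSup T).1 := (le_sSup hX : X ≤ sSup T) hp

lemma cidl_eq_sSup_eta (X : CIdl C) : X = sSup (etaC C '' X.1) := by
  apply le_antisymm
  · intro p hp
    exact mem_sSup_of_mem (Set.mem_image_of_mem (etaC C) hp) (subset_genC C {p} rfl)
  · apply sSup_le
    rintro _ ⟨p, hp, rfl⟩
    exact etaC_le_iff.mpr hp

end Aux

/-- `C-Idl(P)` with `η : x ↦ ⟨x⟩` is the suplattice freely generated by the
suplattice presentation `⟨P; ⊑, C⟩`. -/
theorem statement2 {P : Type*} [Preorder P] (C : P → Set P → Prop) :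
    Monotone (etaC C) ∧
    (∀ x U, C x U → etaC C x ≤ sSup (etaC C '' U)) ∧
    ∀ (D : Type*) [CompleteLattice D] (f : P → D), Monotone f →
      (∀ x U, C x U → f x ≤ sSup (f '' U)) →
      ∃! g : CIdl C → D, (∀ T : Set (CIdl C), g (sSup T) = sSup (g '' T)) ∧
        ∀ x, g (etaC C x) = f x := by
  refine ⟨?_, ?_, ?_⟩
  · intro x y hxy
    exact etaC_le_iff.mpr ((isCIdeal_genC C {y}).1 y (subset_genC C {y} rfl) x hxy)
  · intro x U hxU
    refine etaC_le_iff.mpr ?_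
    refine (sSup (etaC C '' U)).2.2 x U hxU ?_
    intro u hu
    exact mem_sSup_of_mem (Set.mem_image_of_mem (etaC C) hu) (subset_genC C {u} rfl)
  · intro D _ f hf hfc
    have hY : ∀ d : D, IsCIdeal C {p | f p ≤ d} := by
      intro d
      constructor
      · intro x hx y hyx; exact (hf hyx).trans hx
      · intro x U hU hsub
        refine (hfc x U hU).trans (sSup_le ?_)
        rintro _ ⟨u, hu, rfl⟩; exact hsub hu
    refine ⟨fun X => sSup (f '' X.1), ⟨?_, ?_⟩, ?_⟩
    · intro T
      apply le_antisymm
      · apply sSup_le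
        rintro _ ⟨p, hp, rfl⟩
        have : (sSup T).1 ⊆ {q | f q ≤ sSup ((fun X : CIdl C => sSup (f '' X.1)) '' T)} := by
          refine (sSup_le ?_ : sSup T ≤ (⟨_, hY _⟩ : CIdl C))
          intro X hX q hq
          exact le_trans (le_sSup (Set.mem_image_of_mem f hq)) (le_sSup (Set.mem_image_of_mem _ hX))
        exact this hp
      · apply sSup_le
        rintro _ ⟨X, hX, rfl⟩
        apply sSup_le
        rintro _ ⟨p, hp, rfl⟩
        exact le_sSup (Set.mem_image_of_mem f (mem_sSup_of_mem hX hp))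
    · intro x
      apply le_antisymm
      · apply sSup_le
        rintro _ ⟨p, hp, rfl⟩
        exact genC_min (hY (f x)) (by simp) hp
      · exact le_sSup (Set.mem_image_of_mem f (subset_genC C {x} rfl))
    · rintro g ⟨hg1, hg2⟩
      funext X
      have h := hg1 (etaC C '' X.1)
      rw [← cidl_eq_sSup_eta (C := C) X] at h
      rw [h]
      congr 1
      ext d
      constructor
      · rintro ⟨_, ⟨p, hp, rfl⟩, rfl⟩; exact ⟨p, hp, (hg2 p).symm⟩
      · rintro ⟨p, hp, rfl⟩; exact ⟨_, ⟨p, hp, rfl⟩, hg2 p⟩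
end

section
/- For posets P and Q, the co-directed meet completion of the product is isomorphic to the product of the co-directed meet completions: ℱ(P × Q) ≅ ℱ(P) × ℱ(Q). -/
lemma filt_prod_eq {P Q : Type*} [Preorder P] [Preorder Q] {F : Set (P × Q)}
    (hF : IsFilt F) : F = (Prod.fst '' F) ×ˢ (Prod.snd '' F) := by
  ext ⟨a, b⟩
  constructor
  · intro h; exact ⟨⟨(a,b), h, rfl⟩, ⟨(a,b), h, rfl⟩⟩
  · rintro ⟨⟨⟨a', b'⟩, h1, rfl⟩, ⟨⟨a'', b''⟩, h2, rfl⟩⟩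
    obtain ⟨c, hc, hc1, hc2⟩ := hF.2.2 _ h1 _ h2
    exact hF.2.1 c hc _ ⟨hc1.1, hc2.2⟩

lemma isFilt_fst {P Q : Type*} [Preorder P] [Preorder Q] {F : Set (P × Q)}
    (hF : IsFilt F) : IsFilt (Prod.fst '' F) := by
  obtain ⟨⟨w, hw⟩, hup, hdir⟩ := hF
  refine ⟨⟨w.1, w, hw, rfl⟩, ?_, ?_⟩
  · rintro a ⟨x, hx, rfl⟩ b hab
    exact ⟨(b, x.2), hup x hx (b, x.2) ⟨hab, le_rfl⟩, rfl⟩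
  · rintro a ⟨x, hx, rfl⟩ b ⟨y, hy, rfl⟩
    obtain ⟨c, hc, h1, h2⟩ := hdir x hx y hy
    exact ⟨c.1, ⟨c, hc, rfl⟩, h1.1, h2.1⟩

lemma isFilt_snd {P Q : Type*} [Preorder P] [Preorder Q] {F : Set (P × Q)}
    (hF : IsFilt F) : IsFilt (Prod.snd '' F) := by
  obtain ⟨⟨w, hw⟩, hup, hdir⟩ := hF
  refine ⟨⟨w.2, w, hw, rfl⟩, ?_, ?_⟩
  · rintro a ⟨x, hx, rfl⟩ b hab
    exact ⟨(x.1, b), hup x hx (x.1, b) ⟨le_rfl, hab⟩, rfl⟩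
  · rintro a ⟨x, hx, rfl⟩ b ⟨y, hy, rfl⟩
    obtain ⟨c, hc, h1, h2⟩ := hdir x hx y hy
    exact ⟨c.2, ⟨c, hc, rfl⟩, h1.2, h2.2⟩

lemma isFilt_prod {P Q : Type*} [Preorder P] [Preorder Q] {F : Set P} {G : Set Q}
    (hF : IsFilt F) (hG : IsFilt G) : IsFilt (F ×ˢ G) := by
  obtain ⟨⟨a, ha⟩, hupF, hdF⟩ := hF
  obtain ⟨⟨b, hb⟩, hupG, hdG⟩ := hG
  refine ⟨⟨(a, b), ha, hb⟩, ?_, ?_⟩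
  · rintro x ⟨hx1, hx2⟩ y hxy
    exact ⟨hupF _ hx1 _ hxy.1, hupG _ hx2 _ hxy.2⟩
  · rintro x ⟨hx1, hx2⟩ y ⟨hy1, hy2⟩
    obtain ⟨c, hc, hc1, hc2⟩ := hdF _ hx1 _ hy1
    obtain ⟨d, hd, hd1, hd2⟩ := hdG _ hx2 _ hy2
    exact ⟨(c, d), ⟨hc, hd⟩, ⟨hc1, hd1⟩, ⟨hc2, hd2⟩⟩

/-- `ℱ(P × Q) ≅ ℱ(P) × ℱ(Q)`. -/
theorem statement6 {P Q : Type*} [PartialOrder P] [PartialOrder Q] :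
    Nonempty (FComp (P × Q) ≃o FComp P × FComp Q) := by
  refine ⟨⟨⟨fun F => (⟨Prod.fst '' F.1, isFilt_fst F.2⟩, ⟨Prod.snd '' F.1, isFilt_snd F.2⟩),
    fun x => ⟨x.1.1 ×ˢ x.2.1, isFilt_prod x.1.2 x.2.2⟩, ?_, ?_⟩, ?_⟩⟩
  · intro F
    exact Subtype.ext (filt_prod_eq F.2).symm
  · rintro ⟨⟨F, hF⟩, ⟨G, hG⟩⟩
    obtain ⟨⟨a, ha⟩, _, _⟩ := hF
    obtain ⟨⟨b, hb⟩, _, _⟩ := hG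
    refine Prod.ext (Subtype.ext ?_) (Subtype.ext ?_)
    · ext x
      exact ⟨fun ⟨y, hy, h⟩ => h ▸ hy.1, fun hx => ⟨(x, b), ⟨hx, hb⟩, rfl⟩⟩
    · ext x
      exact ⟨fun ⟨y, hy, h⟩ => h ▸ hy.2, fun hx => ⟨(a, x), ⟨ha, hx⟩, rfl⟩⟩
  · intro F G
    constructor
    · rintro ⟨h1, h2⟩
      show G.1 ⊆ F.1
      rw [filt_prod_eq G.2, filt_prod_eq F.2]
      exact Set.prod_mono h1 h2
    · intro h
      exact ⟨Set.image_mono h, Set.image_mono h⟩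
end

section
/- If an ordered Ω-algebra A satisfies an inequation s ≼ t between Ω-terms with all basic operations order-preserving, then the co-directed meet completion ℱ(A), with operations extended by co-Scott continuity, also satisfies s ≼ t. -/
/-- The lifted interpretation of the operation symbols on `ℱ(A)`. -/
def liftInterp {Ω : Type*} {ar : Ω → ℕ} {A : Type*} [PartialOrder A]
    (interp : ∀ ω, (Fin (ar ω) → A) → A) (hm : ∀ ω, Monotone (interp ω)) :
    ∀ ω : Ω, (Fin (ar ω) → FComp A) → FComp A :=
  fun ω => liftF (A := fun _ : Fin (ar ω) => A) (interp ω) (hm ω)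

lemma filt_lb {A : Type*} [Preorder A] {F : Set A} (hF : IsFilt F) :
    ∀ (m : ℕ) (g : Fin m → A), (∀ j, g j ∈ F) → ∃ c ∈ F, ∀ j, c ≤ g j := by
  intro m
  induction m with
  | zero => intro g _; exact ⟨hF.1.choose, hF.1.choose_spec, fun j => j.elim0⟩
  | succ k ih =>
    intro g hg
    obtain ⟨c', hc', hle⟩ := ih (fun j => g j.succ) (fun j => hg j.succ)
    obtain ⟨c, hc, hc1, hc2⟩ := hF.2.2 c' hc' (g 0) (hg 0)
    refine ⟨c, hc, fun j => ?_⟩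
    refine Fin.cases hc2 (fun j => hc1.trans (hle j)) j

lemma evalT_mono {Ω : Type*} {ar : Ω → ℕ} {n : ℕ} {A : Type*} [Preorder A]
    (interp : ∀ ω, (Fin (ar ω) → A) → A) (hm : ∀ ω, Monotone (interp ω))
    {v w : Fin n → A} (hvw : ∀ i, v i ≤ w i) :
    ∀ u : OTerm Ω ar n, evalT interp v u ≤ evalT interp w u := by
  intro u
  induction u with
  | var i => exact hvw i
  | op ω args ih => exact hm ω fun j => ih j

lemma mem_eval {Ω : Type*} {ar : Ω → ℕ} {A : Type*} [PartialOrder A]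
    (interp : ∀ ω, (Fin (ar ω) → A) → A) (hm : ∀ ω, Monotone (interp ω))
    {n : ℕ} (V : Fin n → FComp A) (u : OTerm Ω ar n) (b : A) :
    b ∈ (evalT (liftInterp interp hm) V u).1 ↔
      ∃ v : Fin n → A, (∀ i, v i ∈ (V i).1) ∧ evalT interp v u ≤ b := by
  induction u generalizing b with
  | var i =>
    constructor
    · intro hb
      classical
      refine ⟨Function.update (fun j => (V j).2.1.choose) i b, fun j => ?_, ?_⟩
      · by_cases hji : j = i
        · subst hji; simpa [evalT] using hb
        · simp only [Function.update_of_ne hji]; exact (V j).2.1.choose_spec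
      · simp [evalT]
    · rintro ⟨v, hv, hle⟩
      exact (V i).2.2.1 (v i) (hv i) b hle
  | op ω args ih =>
    constructor
    · rintro ⟨a, ha, hab⟩
      choose w hw hwle using fun j => (ih j (a j)).mp (ha j)
      -- for each coordinate i, find common lower bound of w j i in V i
      have hlb : ∀ i : Fin n, ∃ c ∈ (V i).1, ∀ j : Fin (ar ω), c ≤ w j i := by
        intro i
        exact filt_lb (V i).2 (ar ω) (fun j => w j i) (fun j => hw j i)
      choose v hv hvle using hlb
      refine ⟨v, hv, ?_⟩
      refine le_trans ?_ hab
      refine le_trans (hm ω (fun j => ?_)) (hm ω hwle)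
      exact evalT_mono interp hm (fun i => hvle i j) (args j)
    · rintro ⟨v, hv, hle⟩
      exact ⟨fun j => evalT interp v (args j),
        fun j => (ih j _).mpr ⟨v, hv, le_rfl⟩, hle⟩

/-- inequations between Ω-terms valid in an ordered Ω-algebra with monotone
operations remain valid in its co-directed meet completion with the co-Scott continuously
extended operations. -/
theorem statement7 {Ω : Type*} {ar : Ω → ℕ} {A : Type*} [PartialOrder A]
    (interp : ∀ ω, (Fin (ar ω) → A) → A) (hm : ∀ ω, Monotone (interp ω))
    {n : ℕ} (s t : OTerm Ω ar n)
    (h : ∀ v : Fin n → A, evalT interp v s ≤ evalT interp v t) :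
    ∀ V : Fin n → FComp A,
      evalT (liftInterp interp hm) V s ≤ evalT (liftInterp interp hm) V t := by
  intro V
  show (evalT (liftInterp interp hm) V t).1 ⊆ (evalT (liftInterp interp hm) V s).1
  intro b hb
  obtain ⟨v, hv, hle⟩ := (mem_eval interp hm V t b).mp hb
  exact (mem_eval interp hm V s b).mpr ⟨v, hv, (h v).trans hle⟩
end

section
/- If A is a bounded lattice, then its co-directed meet completion ℱ(A), equipped with the co-Scott continuous extensions of meet and join and the images of 0 and 1, is a complete lattice, and the embedding ↑_A : A → ℱ(A) is a bounded lattice embedding. -/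
section Helpers
variable {A : Type*} [Lattice A]

lemma mem_supF (x y : FComp A) (b : A) :
    b ∈ (supF x y).1 ↔ ∃ a ∈ x.1, ∃ c ∈ y.1, a ⊔ c ≤ b := by
  constructor
  · rintro ⟨a, ha, hab⟩
    exact ⟨a 0, ha 0, a 1, ha 1, hab⟩
  · rintro ⟨a, ha, c, hc, h⟩
    refine ⟨![a, c], ?_, h⟩
    intro i
    fin_cases i <;> simpa

lemma mem_infF (x y : FComp A) (b : A) :
    b ∈ (infF x y).1 ↔ ∃ a ∈ x.1, ∃ c ∈ y.1, a ⊓ c ≤ b := by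
  constructor
  · rintro ⟨a, ha, hab⟩
    exact ⟨a 0, ha 0, a 1, ha 1, hab⟩
  · rintro ⟨a, ha, c, hc, h⟩
    refine ⟨![a, c], ?_, h⟩
    intro i
    fin_cases i <;> simpa

end Helpers

/-- for a bounded lattice `A`, the completion `ℱ(A)` with the extended meet and
join is a complete lattice, and `↑ : A → ℱ(A)` is a bounded lattice embedding. -/
theorem statement8 {A : Type*} [Lattice A] [BoundedOrder A] :
    (∀ S : Set (FComp A), (∃ x, IsLUB S x) ∧ ∃ x, IsGLB S x) ∧
    (∀ x y : FComp A, IsLUB {x, y} (supF x y)) ∧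
    (∀ x y : FComp A, IsGLB {x, y} (infF x y)) ∧
    (∀ a b : A, pf a ≤ pf b ↔ a ≤ b) ∧
    (∀ a b : A, pf (a ⊔ b) = supF (pf a) (pf b)) ∧
    (∀ a b : A, pf (a ⊓ b) = infF (pf a) (pf b)) ∧
    IsTop (pf (⊤ : A)) ∧ IsBot (pf (⊥ : A)) := by
  refine ⟨?_, ?_, ?_, ?_, ?_, ?_, ?_, ?_⟩
  · intro S
    exact ⟨⟨sSup S, isLUB_sSup S⟩, sInf S, isGLB_sInf S⟩
  · intro x y
    constructor
    · rintro z (rfl | rfl)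
      · intro b hb
        obtain ⟨a, ha, c, hc, h⟩ := (mem_supF z y b).mp hb
        exact z.2.2.1 a ha b (le_trans le_sup_left h)
      · intro b hb
        obtain ⟨a, ha, c, hc, h⟩ := (mem_supF x z b).mp hb
        exact z.2.2.1 c hc b (le_trans le_sup_right h)
    · intro w hw b hb
      have hx : b ∈ x.1 := hw (Set.mem_insert _ _) hb
      have hy : b ∈ y.1 := hw (Set.mem_insert_of_mem _ rfl) hb
      exact (mem_supF x y b).mpr ⟨b, hx, b, hy, by simp⟩
  · intro x y
    constructor
    · rintro z (rfl | rfl)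
      · intro a ha
        obtain ⟨c, hc⟩ := y.2.1
        exact (mem_infF z y a).mpr ⟨a, ha, c, hc, inf_le_left⟩
      · intro a ha
        obtain ⟨c, hc⟩ := x.2.1
        exact (mem_infF x z a).mpr ⟨c, hc, a, ha, inf_le_right⟩
    · intro w hw b hb
      obtain ⟨a, ha, c, hc, h⟩ := (mem_infF x y b).mp hb
      have hax : a ∈ w.1 := hw (Set.mem_insert _ _) ha
      have hcy : c ∈ w.1 := hw (Set.mem_insert_of_mem _ rfl) hc
      obtain ⟨d, hd, hda, hdc⟩ := w.2.2.2 a hax c hcy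
      exact w.2.2.1 d hd b (le_trans (le_inf hda hdc) h)
  · intro a b
    constructor
    · intro h
      exact h (le_refl b)
    · intro h c hc
      exact le_trans h hc
  · intro a b
    apply Subtype.ext
    ext c
    constructor
    · intro h
      exact (mem_supF (pf a) (pf b) c).mpr ⟨a, le_refl a, b, le_refl b, h⟩
    · intro h
      obtain ⟨a', ha', b', hb', h'⟩ := (mem_supF (pf a) (pf b) c).mp h
      exact le_trans (sup_le_sup ha' hb') h'
  · intro a b
    apply Subtype.ext
    ext c
    constructor
    · intro h
      exact (mem_infF (pf a) (pf b) c).mpr ⟨a, le_refl a, b, le_refl b, h⟩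
    · intro h
      obtain ⟨a', ha', b', hb', h'⟩ := (mem_infF (pf a) (pf b) c).mp h
      exact le_trans (inf_le_inf ha' hb') h'
  · intro x b hb
    have : b = ⊤ := le_antisymm le_top hb
    subst this
    obtain ⟨c, hc⟩ := x.2.1
    exact x.2.2.1 c hc ⊤ le_top
  · intro x a _
    exact bot_le
end

section
/- If f : A₁ × ⋯ × Aₙ → B is an operator between bounded lattices (preserves binary joins in each coordinate), then its co-Scott continuous extension f^ℱ : ℱ(A₁) × ⋯ × ℱ(Aₙ) → ℱ(B) is also an operator. -/
/-- the extension `f^ℱ` of an operator between bounded lattices is again an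
operator (preserves the extended binary joins in each coordinate). -/
theorem statement9 {n : ℕ} {A : Fin n → Type*} {B : Type*}
    [∀ i, Lattice (A i)] [∀ i, BoundedOrder (A i)] [Lattice B] [BoundedOrder B]
    (f : (∀ i, A i) → B) (hf : Monotone f) (hop : IsOperator f) :
    ∀ (x : ∀ i, FComp (A i)) (i : Fin n) (y : FComp (A i)),
      liftF f hf (Function.update x i (supF (x i) y)) =
        supF (liftF f hf x) (liftF f hf (Function.update x i y)) := by
  intro x i y
  apply Subtype.ext
  ext b
  constructor
  · rintro ⟨a, ha, hab⟩
    have hai : a i ∈ (supF (x i) y).1 := by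
      have := ha i
      rwa [Function.update_self] at this
    obtain ⟨g, hg, hgi⟩ := hai
    have hg0 : g 0 ∈ (x i).1 := hg 0
    have hg1 : g 1 ∈ y.1 := hg 1
    set p := Function.update a i (g 0) with hp
    set q := Function.update a i (g 1) with hq
    have hpj : ∀ j, p j ∈ (x j).1 := by
      intro j
      by_cases hj : j = i
      · subst hj; simpa [hp] using hg0
      · rw [hp, Function.update_of_ne hj]
        have := ha j
        rwa [Function.update_of_ne hj] at this
    have hqj : ∀ j, q j ∈ ((Function.update x i y) j).1 := by
      intro j
      by_cases hj : j = i
      · subst hj; simpa [hq] using hg1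
      · rw [hq, Function.update_of_ne hj, Function.update_of_ne hj]
        have := ha j
        rwa [Function.update_of_ne hj] at this
    have key : f p ⊔ f q = f (Function.update a i (g 0 ⊔ g 1)) := by
      have := hop p i (g 1)
      rw [hp] at this
      simp only [Function.update_self, Function.update_idem] at this
      rw [← hp] at this
      exact this.symm
    have hle : f p ⊔ f q ≤ b := by
      rw [key]
      refine le_trans (hf ?_) hab
      intro j
      by_cases hj : j = i
      · subst hj; simpa using hgi
      · rw [Function.update_of_ne hj]
    refine ⟨![f p, f q], ?_, ?_⟩
    · intro k
      match k with
      | 0 => exact ⟨p, hpj, le_rfl⟩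
      | 1 => exact ⟨q, hqj, le_rfl⟩
    · simpa using hle
  · rintro ⟨h, hh, hb⟩
    obtain ⟨a1, ha1, h1⟩ := hh 0
    obtain ⟨a2, ha2, h2⟩ := hh 1
    have ha2' : ∀ j, Function.update a2 i (a1 i) j ∈ (x j).1 := by
      intro j
      by_cases hj : j = i
      · subst hj; simpa using ha1 j
      · rw [Function.update_of_ne hj]
        have := ha2 j
        rwa [Function.update_of_ne hj] at this
    choose c hc hc1 hc2 using fun j =>
      (x j).2.2.2 (a1 j) (ha1 j) (Function.update a2 i (a1 i) j) (ha2' j)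
    have hc2' : ∀ j, j ≠ i → c j ≤ a2 j := by
      intro j hj
      have := hc2 j
      rwa [Function.update_of_ne hj] at this
    set a'' := Function.update c i (a1 i ⊔ a2 i) with ha''
    have ha2i : a2 i ∈ y.1 := by
      have := ha2 i
      rwa [Function.update_self] at this
    refine ⟨a'', ?_, ?_⟩
    · intro j
      by_cases hj : j = i
      · subst hj
        rw [Function.update_self]
        refine ⟨![a1 j, a2 j], ?_, ?_⟩
        · intro k
          match k with
          | 0 => exact ha1 j
          | 1 => exact ha2i
        · simp [ha'']
      · rw [Function.update_of_ne hj, ha'', Function.update_of_ne hj]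
        exact hc j
    · set c' := Function.update c i (a1 i) with hc'
      have key : f a'' = f c' ⊔ f (Function.update c i (a2 i)) := by
        have := hop c' i (a2 i)
        rw [hc'] at this
        simp only [Function.update_self, Function.update_idem] at this
        rw [ha'']
        exact this
      rw [key]
      have hb' : h 0 ⊔ h 1 ≤ b := hb
      refine le_trans (sup_le_sup ?_ ?_) hb'
      · refine le_trans (hf ?_) h1
        intro j
        by_cases hj : j = i
        · subst hj; simp [hc']
        · rw [hc', Function.update_of_ne hj]; exact hc1 j
      · refine le_trans (hf ?_) h2
        intro j
        by_cases hj : j = i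
        · subst hj; simp
        · rw [Function.update_of_ne hj]; exact hc2' j hj
end

section
/- Every lattice A has a canonical extension e : A → Aᵟ (a lattice completion that is dense and compact), and it is unique up to isomorphism of completions. -/
universe u


namespace S10

universe v

section Construction
variable {A : Type v} [Lattice A] [BoundedOrder A]

def meets (F I : Set A) : Prop := ∃ c, c ∈ F ∧ c ∈ I

lemma isIdl_down' {B : Type*} [Preorder B] (a : B) : IsIdl {b : B | b ≤ a} :=
  ⟨⟨a, le_rfl⟩, fun x hx b hb => le_trans hb hx, fun x hx y hy => ⟨a, le_rfl, hx, hy⟩⟩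

def Closed (𝒜 : Set {F : Set A // IsFilt F}) : Prop :=
  ∀ F : {F : Set A // IsFilt F},
    (∀ I : Set A, IsIdl I → (∀ G ∈ 𝒜, meets G.1 I) → meets F.1 I) → F ∈ 𝒜

lemma isIdl_down (a : A) : IsIdl {b : A | b ≤ a} := isIdl_down' a

end Construction

/-- The canonical extension: Galois-closed sets of filters. -/
abbrev CExt (A : Type v) [Lattice A] [BoundedOrder A] : Type v :=
  {𝒜 : Set {F : Set A // IsFilt F} // Closed 𝒜}

section Construction2
variable {A : Type v} [Lattice A] [BoundedOrder A]

lemma closed_sInter (T : Set (Set {F : Set A // IsFilt F}))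
    (hT : ∀ X ∈ T, Closed X) : Closed (⋂₀ T) := by
  intro F hF
  rw [Set.mem_sInter]
  intro X hX
  refine hT X hX F ?_
  intro I hI hGI
  refine hF I hI ?_
  intro G hG
  exact hGI G (Set.mem_sInter.mp hG X hX)

noncomputable instance : InfSet (CExt A) :=
  ⟨fun S => ⟨⋂₀ (Subtype.val '' S),
    closed_sInter _ (by rintro X ⟨Y, _, rfl⟩; exact Y.2)⟩⟩

noncomputable instance : CompleteLattice (CExt A) :=
  completeLatticeOfInf _ (by
    intro S
    constructor
    · intro X hX
      exact fun a ha => Set.mem_sInter.mp ha X.1 ⟨X, hX, rfl⟩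
    · intro Y hY a ha
      refine Set.mem_sInter.mpr ?_
      rintro Z ⟨X, hX, rfl⟩
      exact hY hX ha)

lemma cext_le_iff {x y : CExt A} : x ≤ y ↔ x.1 ⊆ y.1 := Iff.rfl

/-- The embedding into the canonical extension. -/
def emb (a : A) : CExt A :=
  ⟨{F | a ∈ F.1}, by
    intro F hF
    obtain ⟨c, hcF, hca⟩ := hF {b | b ≤ a} (isIdl_down a)
      (fun G hG => ⟨a, hG, le_rfl⟩)
    exact F.2.2.1 c hcF a hca⟩

lemma closed_hat (F : Set A) : Closed {G : {F : Set A // IsFilt F} | F ⊆ G.1} := by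
  intro G hG a haF
  obtain ⟨c, hcG, hca⟩ := hG {b | b ≤ a} (isIdl_down a)
    (fun H hH => ⟨a, hH haF, le_rfl⟩)
  exact G.2.2.1 c hcG a hca

lemma sInf_emb (F : Set A) :
    (sInf (emb '' F) : CExt A) = ⟨{G | F ⊆ G.1}, closed_hat F⟩ := by
  refine IsGLB.sInf_eq ⟨?_, ?_⟩
  · rintro x ⟨a, ha, rfl⟩
    intro G hG
    exact hG ha
  · intro w hw
    intro G hG a haF
    exact hw ⟨a, haF, rfl⟩ hG

lemma closed_check (I : Set A) (hI : IsIdl I) :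
    Closed {G : {F : Set A // IsFilt F} | meets G.1 I} := by
  intro F hF
  exact hF I hI (fun G hG => hG)

lemma sSup_emb (I : Set A) (hI : IsIdl I) :
    (sSup (emb '' I) : CExt A) = ⟨{G | meets G.1 I}, closed_check I hI⟩ := by
  refine IsLUB.sSup_eq ⟨?_, ?_⟩
  · rintro x ⟨a, ha, rfl⟩
    intro G hG
    exact ⟨a, hG, ha⟩
  · rintro w hw G ⟨c, hcG, hcI⟩
    -- G meets I at c; show G ∈ w
    refine w.2 G ?_
    intro I' hI' hmeet
    have hpf : (⟨{b | c ≤ b}, (pf c).2⟩ : {F : Set A // IsFilt F}) ∈ w.1 := by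
      exact cext_le_iff.mp (hw ⟨c, hcI, rfl⟩) (show c ≤ c from le_rfl)
    obtain ⟨d, hdc, hdI'⟩ := hmeet _ hpf
    exact ⟨d, G.2.2.1 c hcG d hdc, hdI'⟩

lemma emb_canext : IsCanExt (emb : A → CExt A) := by
  have hmono : ∀ a b : A, a ≤ b → emb a ≤ emb b := by
    intro a b hab G hG
    exact G.2.2.1 a hG b hab
  refine ⟨?_, ?_, ?_, ?_, ?_⟩
  · -- order embedding
    intro a b
    constructor
    · intro h
      have : (⟨{c | a ≤ c}, (pf a).2⟩ : {F : Set A // IsFilt F}) ∈ (emb b).1 :=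
        h (le_rfl : a ≤ a)
      exact this
    · exact hmono a b
  · -- joins
    intro a b
    refine le_antisymm ?_ (sup_le (hmono a _ le_sup_left) (hmono b _ le_sup_right))
    intro G hG
    refine (emb a ⊔ emb b).2 G ?_
    intro I hI hmeet
    obtain ⟨c, hac, hcI⟩ := hmeet ⟨{x | a ≤ x}, (pf a).2⟩
      (le_sup_left (a := emb a) (b := emb b) (le_rfl : a ≤ a))
    obtain ⟨d, hbd, hdI⟩ := hmeet ⟨{x | b ≤ x}, (pf b).2⟩
      (le_sup_right (a := emb a) (b := emb b) (le_rfl : b ≤ b))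
    obtain ⟨m, hmI, hcm, hdm⟩ := hI.2.2 c hcI d hdI
    have : a ⊔ b ≤ m := sup_le (le_trans hac hcm) (le_trans hbd hdm)
    exact ⟨m, G.2.2.1 _ hG m this, hmI⟩
  · -- meets
    intro a b
    refine le_antisymm (le_inf (hmono _ a inf_le_left) (hmono _ b inf_le_right)) ?_
    intro G hG
    have ha : a ∈ G.1 := (inf_le_left (a := emb a) (b := emb b)) hG
    have hb : b ∈ G.1 := (inf_le_right (a := emb a) (b := emb b)) hG
    obtain ⟨c, hcG, hca, hcb⟩ := G.2.2.2 a ha b hb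
    exact G.2.2.1 c hcG _ (le_inf hca hcb)
  · -- density
    intro u v huv
    obtain ⟨Fl, hFu, hFv⟩ := Set.not_subset.mp huv
    obtain ⟨I, hI, hvI, hFI⟩ : ∃ I, IsIdl I ∧ (∀ G ∈ v.1, meets G.1 I) ∧ ¬ meets Fl.1 I := by
      by_contra hc
      push_neg at hc
      exact hFv (v.2 Fl (fun I hI hm => hc I hI hm))
    refine ⟨Fl.1, I, Fl.2, hI, ?_, ?_, ?_, ?_⟩
    · rw [sInf_emb]
      intro G hG
      refine u.2 G ?_
      intro I' hI' hmeet
      obtain ⟨c, hcF, hcI'⟩ := hmeet Fl hFu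
      exact ⟨c, hG hcF, hcI'⟩
    · rw [sInf_emb]
      intro h
      exact hFv (h (subset_rfl : Fl.1 ⊆ Fl.1))
    · rw [sSup_emb I hI]
      intro G hG
      exact hvI G hG
    · rw [sSup_emb I hI]
      intro h
      exact hFI (h hFu)
  · -- compactness
    intro F I hF hI hle
    rw [sInf_emb, sSup_emb I hI] at hle
    have hmem : (⟨F, hF⟩ : {F : Set A // IsFilt F}) ∈ {G : {F : Set A // IsFilt F} | F ⊆ G.1} :=
      show F ⊆ F from subset_rfl
    obtain ⟨c, hcF, hcI⟩ := cext_le_iff.mp hle hmem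
    exact ⟨c, hcF, c, hcI, le_rfl⟩

end Construction2

section Uniqueness
variable {A : Type*} [Lattice A] {C : Type*} [CompleteLattice C] {e : A → C}

lemma L1 (h : IsCanExt e) {F I : Set A} (hF : IsFilt F) (hI : IsIdl I) :
    sInf (e '' F) ≤ sSup (e '' I) ↔ ∃ b ∈ F, ∃ a ∈ I, b ≤ a := by
  constructor
  · exact h.2.2.2.2 F I hF hI
  · rintro ⟨b, hb, a, ha, hba⟩
    exact le_trans (sInf_le ⟨b, hb, rfl⟩)
      (le_trans ((h.1 b a).mpr hba) (le_sSup ⟨a, ha, rfl⟩))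

lemma L2 (h : IsCanExt e) (u : C) :
    u = sSup {x | ∃ F, IsFilt F ∧ sInf (e '' F) ≤ u ∧ x = sInf (e '' F)} := by
  refine le_antisymm ?_ (sSup_le ?_)
  · by_contra hc
    obtain ⟨F, I, hF, hI, h1, h2, h3, h4⟩ := h.2.2.2.1 _ _ hc
    exact h2 (le_sSup ⟨F, hF, h1, rfl⟩)
  · rintro x ⟨F, hF, hle, rfl⟩
    exact hle

lemma L3 (h : IsCanExt e) (u : C) :
    u = sInf {x | ∃ I, IsIdl I ∧ u ≤ sSup (e '' I) ∧ x = sSup (e '' I)} := by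
  refine le_antisymm (le_sInf ?_) ?_
  · rintro x ⟨I, hI, hle, rfl⟩
    exact hle
  · by_contra hc
    obtain ⟨F, I, hF, hI, h1, h2, h3, h4⟩ := h.2.2.2.1 _ _ hc
    exact h4 (sInf_le ⟨I, hI, h3, rfl⟩)

lemma L4 (h : IsCanExt e) {F : Set A} (hF : IsFilt F) (u : C) :
    sInf (e '' F) ≤ u ↔
      ∀ I, IsIdl I → u ≤ sSup (e '' I) → ∃ b ∈ F, ∃ a ∈ I, b ≤ a := by
  constructor
  · intro hle I hI hu
    exact (L1 h hF hI).mp (hle.trans hu)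
  · intro hyp
    refine le_trans (le_sInf ?_) (L3 h u).ge
    rintro x ⟨I, hI, hu, rfl⟩
    exact (L1 h hF hI).mpr (hyp I hI hu)

lemma sInf_principal (h : IsCanExt e) (a : A) :
    sInf (e '' {b | a ≤ b}) = e a := by
  refine le_antisymm (sInf_le ⟨a, le_rfl, rfl⟩) (le_sInf ?_)
  rintro x ⟨b, hb, rfl⟩
  exact (h.1 a b).mpr hb

lemma sSup_principal (h : IsCanExt e) (a : A) :
    sSup (e '' {b | b ≤ a}) = e a := by
  refine le_antisymm (sSup_le ?_) (le_sSup ⟨a, le_rfl, rfl⟩)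
  rintro x ⟨b, hb, rfl⟩
  exact (h.1 b a).mpr hb

variable {C₁ C₂ : Type*} [CompleteLattice C₁] [CompleteLattice C₂]

/-- The comparison map between two canonical extensions. -/
noncomputable def phi (e₁ : A → C₁) (e₂ : A → C₂) (u : C₁) : C₂ :=
  sSup {x | ∃ F, IsFilt F ∧ sInf (e₁ '' F) ≤ u ∧ x = sInf (e₂ '' F)}

variable {e₁ : A → C₁} {e₂ : A → C₂}

lemma phi_mono (u v : C₁) (huv : u ≤ v) : phi e₁ e₂ u ≤ phi e₁ e₂ v := by
  refine sSup_le_sSup ?_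
  rintro x ⟨F, hF, hle, rfl⟩
  exact ⟨F, hF, hle.trans huv, rfl⟩

lemma phi_le_check (h₁ : IsCanExt e₁) (h₂ : IsCanExt e₂) {I : Set A} (hI : IsIdl I)
    {u : C₁} (hu : u ≤ sSup (e₁ '' I)) : phi e₁ e₂ u ≤ sSup (e₂ '' I) := by
  refine sSup_le ?_
  rintro x ⟨F, hF, hle, rfl⟩
  exact (L1 h₂ hF hI).mpr ((L1 h₁ hF hI).mp (hle.trans hu))

lemma phi_reflect (h₁ : IsCanExt e₁) (h₂ : IsCanExt e₂) {u v : C₁}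
    (hp : phi e₁ e₂ u ≤ phi e₁ e₂ v) : u ≤ v := by
  refine le_trans (L2 h₁ u).le (sSup_le ?_)
  rintro x ⟨F, hF, hle, rfl⟩
  refine (L4 h₁ hF v).mpr ?_
  intro I hI hv
  have hx : sInf (e₂ '' F) ≤ sSup (e₂ '' I) :=
    le_trans (le_sSup ⟨F, hF, hle, rfl⟩ : _ ≤ phi e₁ e₂ u)
      (hp.trans (phi_le_check h₁ h₂ hI hv))
  exact (L1 h₂ hF hI).mp hx

lemma phi_surj (h₁ : IsCanExt e₁) (h₂ : IsCanExt e₂) (w : C₂) :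
    ∃ u, phi e₁ e₂ u = w := by
  refine ⟨sSup {x | ∃ F, IsFilt F ∧ sInf (e₂ '' F) ≤ w ∧ x = sInf (e₁ '' F)}, ?_⟩
  refine le_antisymm (sSup_le ?_) ?_
  · rintro x ⟨G, hG, hle, rfl⟩
    refine (L4 h₂ hG w).mpr ?_
    intro I hI hw
    have hu : sSup {x | ∃ F, IsFilt F ∧ sInf (e₂ '' F) ≤ w ∧ x = sInf (e₁ '' F)}
        ≤ sSup (e₁ '' I) := by
      refine sSup_le ?_
      rintro y ⟨F, hF, hFw, rfl⟩
      exact (L1 h₁ hF hI).mpr ((L1 h₂ hF hI).mp (hFw.trans hw))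
    exact (L1 h₁ hG hI).mp (hle.trans hu)
  · refine le_trans (L2 h₂ w).le (sSup_le ?_)
    rintro x ⟨F, hF, hle, rfl⟩
    exact le_sSup ⟨F, hF, le_sSup ⟨F, hF, hle, rfl⟩, rfl⟩

lemma phi_emb (h₁ : IsCanExt e₁) (h₂ : IsCanExt e₂) (a : A) :
    phi e₁ e₂ (e₁ a) = e₂ a := by
  refine le_antisymm (sSup_le ?_) ?_
  · rintro x ⟨F, hF, hle, rfl⟩
    have : sInf (e₁ '' F) ≤ sSup (e₁ '' {b | b ≤ a}) := by
      rw [sSup_principal h₁]; exact hle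
    obtain ⟨b, hb, c, hc, hbc⟩ := (L1 h₁ hF (isIdl_down' a)).mp this
    exact le_trans (sInf_le ⟨b, hb, rfl⟩) ((h₂.1 b a).mpr (hbc.trans hc))
  · have : sInf (e₂ '' {b | a ≤ b}) ≤ phi e₁ e₂ (e₁ a) :=
      le_sSup ⟨{b | a ≤ b}, (pf a).2, (sInf_principal h₁ a).le, rfl⟩
    rwa [sInf_principal h₂] at this

end Uniqueness

end S10

/-- every (bounded) lattice has a canonical extension (a dense and compact
lattice completion), unique up to isomorphism of completions. -/
theorem statement10 (A : Type u) [Lattice A] [BoundedOrder A] :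
    (∃ (C : Type u) (_ : CompleteLattice C) (e : A → C), IsCanExt e) ∧
    ∀ (C₁ C₂ : Type u) [CompleteLattice C₁] [CompleteLattice C₂]
      (e₁ : A → C₁) (e₂ : A → C₂), IsCanExt e₁ → IsCanExt e₂ →
      ∃ φ : C₁ ≃o C₂, ∀ a, φ (e₁ a) = e₂ a := by
  constructor
  · exact ⟨S10.CExt A, inferInstance, S10.emb, S10.emb_canext⟩
  · intro C₁ C₂ _ _ e₁ e₂ h₁ h₂
    have hbij : Function.Bijective (S10.phi e₁ e₂) := by
      constructor
      · intro u v huv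
        exact le_antisymm (S10.phi_reflect h₁ h₂ huv.le) (S10.phi_reflect h₁ h₂ huv.ge)
      · intro w
        exact S10.phi_surj h₁ h₂ w
    refine ⟨{ toEquiv := Equiv.ofBijective _ hbij,
              map_rel_iff' := fun {u v} =>
                ⟨fun h => S10.phi_reflect h₁ h₂ h, fun h => S10.phi_mono u v h⟩ },
            fun a => S10.phi_emb h₁ h₂ a⟩
end

section
/- For a lattice A, the covering relation C_A on ℱ(A) given by Definition Δ(A) satisfies the join-stability property: for all y ∈ ℱ(A) and all x ◁ U, one has x ∨ y ◁ (U ∨ y), where U ∨ y = {x' ∨ y | x' ∈ U}. -/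
/-- the covering relation `C_A` of `Δ(A)` is join-stable:
if `x ◁ U` then `x ∨ y ◁ U ∨ y`. -/
theorem statement11 {A : Type*} [Lattice A] [BoundedOrder A]
    (y x : FComp A) (U : Set (FComp A)) (h : covD x U) :
    covD (x ⊔ y) ((fun x' => x' ⊔ y) '' U) := by
  obtain ⟨hne, hdir, hidl⟩ := h
  have pf_mono : ∀ a c : A, a ≤ c → pf a ≤ pf c := by
    intro a c hac b hb
    exact le_trans hac hb
  refine ⟨hne.image _, ?_, ?_⟩
  · rintro _ ⟨u, hu, rfl⟩ _ ⟨v, hv, rfl⟩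
    obtain ⟨w, hw, hwu, hwv⟩ := hdir u hu v hv
    exact ⟨w ⊔ y, ⟨w, hw, rfl⟩, sup_le_sup_right hwu y, sup_le_sup_right hwv y⟩
  · intro I hI hcov
    have hcov' : ∀ x' ∈ U, ∃ a' ∈ I, x' ≤ pf a' := by
      intro x' hx'
      obtain ⟨a', ha', hle⟩ := hcov (x' ⊔ y) ⟨x', hx', rfl⟩
      exact ⟨a', ha', le_sup_left.trans hle⟩
    obtain ⟨a, haI, hxa⟩ := hidl I hI hcov'
    obtain ⟨u, hu⟩ := hne
    obtain ⟨a', ha'I, hle'⟩ := hcov (u ⊔ y) ⟨u, hu, rfl⟩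
    have hy : y ≤ pf a' := le_sup_right.trans hle'
    obtain ⟨c, hcI, hac, ha'c⟩ := hI.2.2 a haI a' ha'I
    exact ⟨c, hcI, sup_le (hxa.trans (pf_mono a c hac)) (hy.trans (pf_mono a' c ha'c))⟩
end

section
/- For every x in ℱ(A), the C_A-ideal generated by x equals the principal downset of x: ⟨x⟩ = ↓x; consequently η : ℱ(A) → Δ(A)-bar, x ↦ ⟨x⟩, is an order-embedding. -/
/-- `⟨x⟩ = ↓x` for every `x ∈ ℱ(A)`; consequently `η` is an order-embedding. -/
theorem statement13 {A : Type*} [Lattice A] [BoundedOrder A] :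
    (∀ x : FComp A, genC (covD (A := A)) {x} = {y | y ≤ x}) ∧
    ∀ y z : FComp A, etaC (covD (A := A)) y ≤ etaC (covD (A := A)) z ↔ y ≤ z := by
  have key : ∀ x : FComp A, genC (covD (A := A)) {x} = {y | y ≤ x} := by
    intro x
    have hdown : IsCIdeal (covD (A := A)) {y | y ≤ x} := by
      constructor
      · intro a ha b hba
        exact le_trans hba ha
      · rintro y U ⟨hne, hdir, hcov⟩ hsub
        -- show y ≤ x, i.e. x.1 ⊆ y.1
        intro b hb
        -- use the ideal ↓b
        have hIdl : IsIdl {a : A | a ≤ b} :=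
          ⟨⟨b, le_rfl⟩, fun a ha c hca => le_trans hca ha,
            fun a ha c hc => ⟨a ⊔ c, sup_le ha hc, le_sup_left, le_sup_right⟩⟩
        obtain ⟨a, hab, hya⟩ := hcov _ hIdl (fun u hu => ⟨b, le_rfl, fun c hc => u.2.2.1 b (hsub hu hb) c hc⟩)
        exact y.2.2.1 a (hya le_rfl) b hab
    apply subset_antisymm
    · exact Set.sInter_subset_of_mem ⟨hdown, by simp⟩
    · intro z hz
      exact (isCIdeal_genC (covD (A := A)) {x}).1 x (subset_genC _ {x} rfl) z hz
  refine ⟨key, fun y z => ?_⟩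
  constructor
  · intro h
    have := h (show y ∈ (etaC (covD (A := A)) y).1 from subset_genC _ _ rfl)
    simpa [etaC, key z] using this
  · intro h
    show genC (covD (A := A)) {y} ⊆ genC (covD (A := A)) {z}
    rw [key y, key z]
    exact fun w hw => le_trans hw h
end

section
/- For every directed subset T of a lattice A, the join ⋁_{b∈T} ⟨↑b⟩ in the lattice of C_A-ideals equals the union ⋃_{b∈T} ⟨↑b⟩; i.e., the union of the principal C_A-ideals of the filters ↑b, b ∈ T, is itself a C_A-ideal. -/
section Aux
variable {A : Type*} [Preorder A]

lemma pf_mono {a b : A} (h : a ≤ b) : pf a ≤ pf b :=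
  fun c (hc : b ≤ c) => le_trans h hc

lemma isCIdeal_down (b : A) : IsCIdeal (covD (A := A)) {x : FComp A | x ≤ pf b} := by
  constructor
  · intro x hx y hyx; exact le_trans hyx hx
  · rintro x U ⟨hne, hdirU, hcov⟩ hsub
    obtain ⟨a, ha, hxa⟩ := hcov {a | a ≤ b}
      ⟨⟨b, le_rfl⟩, fun a ha c hc => le_trans hc ha,
        fun a ha c hc => ⟨b, le_rfl, ha, hc⟩⟩
      (fun x' hx' => ⟨b, le_rfl, hsub hx'⟩)
    exact le_trans hxa (pf_mono ha)

lemma genC_pf (b : A) :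
    genC (covD (A := A)) {pf b} = {x : FComp A | x ≤ pf b} := by
  apply subset_antisymm
  · intro x hx
    exact hx _ ⟨isCIdeal_down b, by simp⟩
  · intro x hx
    exact (isCIdeal_genC (covD (A := A)) {pf b}).1 (pf b) (subset_genC _ _ rfl) x hx

end Aux

/-- for directed `T ⊆ A`, the join of the `C_A`-ideals `⟨↑b⟩`, `b ∈ T`, is
their union; i.e. this union is itself a `C_A`-ideal. -/
theorem statement15 {A : Type*} [Lattice A] [BoundedOrder A]
    (T : Set A) (hT : T.Nonempty) (hdir : DirectedOn (· ≤ ·) T) :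
    IsCIdeal (covD (A := A)) (⋃ b ∈ T, (etaC (covD (A := A)) (pf b)).1) ∧
    (sSup ((fun b => etaC (covD (A := A)) (pf b)) '' T)).1 =
      ⋃ b ∈ T, (etaC (covD (A := A)) (pf b)).1 := by
  have hU : (⋃ b ∈ T, (etaC (covD (A := A)) (pf b)).1) =
      ⋃ b ∈ T, {x : FComp A | x ≤ pf b} := by
    simp only [etaC, genC_pf]
  have hIdeal : IsCIdeal (covD (A := A)) (⋃ b ∈ T, (etaC (covD (A := A)) (pf b)).1) := by
    rw [hU]
    constructor
    · intro x hx y hyx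
      obtain ⟨b, hb, hxb⟩ := by simpa using hx
      simp only [Set.mem_iUnion]
      exact ⟨b, hb, le_trans hyx hxb⟩
    · rintro x U ⟨hne, hdirU, hcov⟩ hsub
      obtain ⟨a, ⟨b', hb', hab'⟩, hxa⟩ := hcov {a | ∃ b ∈ T, a ≤ b}
        ⟨⟨hT.choose, hT.choose, hT.choose_spec, le_rfl⟩,
          fun a ⟨b, hb, hab⟩ c hc => ⟨b, hb, le_trans hc hab⟩,
          fun a ⟨b, hb, hab⟩ a' ⟨b', hb', hab'⟩ => by
            obtain ⟨c, hc, hbc, hb'c⟩ := hdir b hb b' hb'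
            exact ⟨c, ⟨c, hc, le_rfl⟩, le_trans hab hbc, le_trans hab' hb'c⟩⟩
        (fun x' hx' => by
          obtain ⟨b, hb, hxb⟩ := by simpa using hsub hx'
          exact ⟨b, ⟨b, hb, le_rfl⟩, hxb⟩)
      simp only [Set.mem_iUnion]
      exact ⟨b', hb', le_trans hxa (pf_mono hab')⟩
  refine ⟨hIdeal, ?_⟩
  apply subset_antisymm
  · have h : sSup ((fun b => etaC (covD (A := A)) (pf b)) '' T) ≤
        ⟨_, hIdeal⟩ := by
      apply sSup_le
      rintro X ⟨b, hb, rfl⟩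
      intro x hx
      exact Set.mem_biUnion hb hx
    exact h
  · intro x hx
    obtain ⟨b, hb, hxb⟩ := by simpa using hx
    have h2 : etaC (covD (A := A)) (pf b) ≤
        sSup ((fun b => etaC (covD (A := A)) (pf b)) '' T) :=
      le_sSup (Set.mem_image_of_mem _ hb)
    exact h2 hxb
end

section
/- If f : A₁ × ⋯ × Aₙ → B is an operator between lattices, then its filter-completion extension f^ℱ : ℱ(A₁) × ⋯ × ℱ(Aₙ) → ℱ(B) is cover-stable with respect to the covering relations C_{A₁},…,C_{Aₙ}, C_B. -/
lemma le_pf_iff' {A : Type*} [Preorder A] (w : FComp A) (b : A) :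
    w ≤ pf b ↔ b ∈ w.1 := by
  constructor
  · intro h
    exact h (le_refl b)
  · intro hb c hc
    exact w.2.2.1 b hb c hc

lemma liftF_mono_update' {n : ℕ} {A : Fin n → Type*} {B : Type*}
    [∀ i, Preorder (A i)] [Preorder B]
    (f : (∀ i, A i) → B) (hf : Monotone f) (x : ∀ i, FComp (A i)) (i : Fin n)
    {y y' : FComp (A i)} (h : y ≤ y') :
    liftF f hf (Function.update x i y) ≤ liftF f hf (Function.update x i y') := by
  rintro b ⟨a, ha, hab⟩
  refine ⟨a, fun j => ?_, hab⟩
  by_cases hj : j = i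
  · subst hj
    have := ha j
    simp only [Function.update_self] at this ⊢
    exact h this
  · have := ha j
    simpa [Function.update_of_ne hj] using this

/-- the filter-completion extension of an operator between (bounded) lattices
is cover-stable with respect to the covering relations of the presentations `Δ(Aᵢ)`, `Δ(B)`. -/
theorem statement17 {n : ℕ} {A : Fin n → Type*} {B : Type*}
    [∀ i, Lattice (A i)] [∀ i, BoundedOrder (A i)] [Lattice B] [BoundedOrder B]
    (f : (∀ i, A i) → B) (hf : Monotone f) (hop : IsOperator f) :
    ∀ (x : ∀ i, FComp (A i)) (i : Fin n) (U : Set (FComp (A i))),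
      covD (x i) U →
      covD (liftF f hf x) ((fun y => liftF f hf (Function.update x i y)) '' U) := by
  intro x i U hU
  obtain ⟨⟨y0, hy0⟩, hdir, hcov⟩ := hU
  refine ⟨⟨_, Set.mem_image_of_mem _ hy0⟩, ?_, ?_⟩
  · rintro _ ⟨y1, hy1, rfl⟩ _ ⟨y2, hy2, rfl⟩
    obtain ⟨y3, hy3, h13, h23⟩ := hdir y1 hy1 y2 hy2
    exact ⟨_, Set.mem_image_of_mem _ hy3,
      liftF_mono_update' f hf x i h13, liftF_mono_update' f hf x i h23⟩
  · intro J hJ hall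
    set I : Set (A i) :=
      {c | ∃ a : ∀ j, A j, (∀ j, j ≠ i → a j ∈ (x j).1) ∧ f (Function.update a i c) ∈ J}
      with hIdef
    have key : ∀ y ∈ U, ∃ c ∈ I, y ≤ pf c := by
      intro y hy
      obtain ⟨b', hb'J, hle⟩ := hall _ (Set.mem_image_of_mem _ hy)
      rw [le_pf_iff'] at hle
      obtain ⟨a, ha, hab⟩ := hle
      refine ⟨a i, ⟨a, fun j hj => by simpa [Function.update_of_ne hj] using ha j, ?_⟩, ?_⟩
      · rw [Function.update_eq_self]
        exact hJ.2.1 b' hb'J _ hab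
      · rw [le_pf_iff']
        simpa using ha i
    have hI : IsIdl I := by
      refine ⟨?_, ?_, ?_⟩
      · obtain ⟨c, hc, _⟩ := key y0 hy0
        exact ⟨c, hc⟩
      · rintro c ⟨a, ha, haJ⟩ c' hcc'
        refine ⟨a, ha, hJ.2.1 _ haJ _ (hf fun j => ?_)⟩
        by_cases hj : j = i
        · subst hj; simpa using hcc'
        · simp [Function.update_of_ne hj]
      · rintro c1 ⟨a1, ha1, h1J⟩ c2 ⟨a2, ha2, h2J⟩
        have h3 : ∀ j, ∃ c, (j ≠ i → c ∈ (x j).1) ∧ c ≤ a1 j ∧ c ≤ a2 j := by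
          intro j
          by_cases hj : j = i
          · exact ⟨a1 j ⊓ a2 j, fun h => absurd hj h, inf_le_left, inf_le_right⟩
          · obtain ⟨c, hc, hc1, hc2⟩ := (x j).2.2.2 _ (ha1 j hj) _ (ha2 j hj)
            exact ⟨c, fun _ => hc, hc1, hc2⟩
        choose a3 ha3 h31 h32 using h3
        have heq : f (Function.update a3 i (c1 ⊔ c2)) =
            f (Function.update a3 i c1) ⊔ f (Function.update a3 i c2) := by
          have := hop (Function.update a3 i c1) i c2
          simpa [Function.update_idem, Function.update_self] using this
        have hle1 : f (Function.update a3 i c1) ≤ f (Function.update a1 i c1) := by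
          refine hf fun j => ?_
          by_cases hj : j = i
          · subst hj; simp
          · simpa [Function.update_of_ne hj] using h31 j
        have hle2 : f (Function.update a3 i c2) ≤ f (Function.update a2 i c2) := by
          refine hf fun j => ?_
          by_cases hj : j = i
          · subst hj; simp
          · simpa [Function.update_of_ne hj] using h32 j
        obtain ⟨d, hdJ, hd1, hd2⟩ := hJ.2.2 _ h1J _ h2J
        refine ⟨c1 ⊔ c2, ⟨a3, fun j hj => ha3 j hj, ?_⟩, le_sup_left, le_sup_right⟩
        refine hJ.2.1 d hdJ _ ?_
        rw [heq]
        exact sup_le (hle1.trans hd1) (hle2.trans hd2)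
    obtain ⟨c, ⟨a, ha, haJ⟩, hxc⟩ := hcov I hI key
    rw [le_pf_iff'] at hxc
    refine ⟨f (Function.update a i c), haJ, ?_⟩
    rw [le_pf_iff']
    refine ⟨Function.update a i c, fun j => ?_, le_rfl⟩
    by_cases hj : j = i
    · subst hj; simpa using hxc
    · simpa [Function.update_of_ne hj] using ha j hj
end
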